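/- arXiv:2208.02303 — 4 statements merged into one kernel-verified Lean document; each statement's English description precedes it below -/
import Mathlib

section
/- Let E be a Banach lattice. Assume (property (d)) that for every disjoint w*-null sequence (f_n) in E′ and every x ≥ 0 in E one has sup{ f_n(w) : |w| ≤ x } → 0, and assume (positive Grothendieck property) that every w*-null sequence of positive functionals in E′ is weakly null. Then every disjoint w*-null sequence in E′ is weakly null (i.e., E has the disjoint Grothendieck property). -/
open Filter Topology

/-- Two continuous functionals `f, g` on a Banach lattice are disjoint
(`|f| ⊓ |g| = 0` in the dual lattice). -/
def DualDisjoint {E : Type*} [NormedAddCommGroup E] [Lattice E] [HasSolidNorm E]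
    [IsOrderedAddMonoid E] [NormedSpace ℝ E]
    (f g : E →L[ℝ] ℝ) : Prop :=
  ∀ x : E, 0 ≤ x → ∀ ε : ℝ, 0 < ε → ∃ u v : E, 0 ≤ u ∧ 0 ≤ v ∧ u + v = x ∧
    (∀ w : E, |w| ≤ u → |f w| ≤ ε) ∧ (∀ z : E, |z| ≤ v → |g z| ≤ ε)

section Aux

variable {E : Type*} [NormedAddCommGroup E] [Lattice E] [HasSolidNorm E]
    [IsOrderedAddMonoid E] [NormedSpace ℝ E]

/-- Riesz decomposition. -/
lemma riesz_decomp {x y w : E} (hx : 0 ≤ x) (hy : 0 ≤ y) (hw : |w| ≤ x + y) :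
    ∃ u v : E, |u| ≤ x ∧ |v| ≤ y ∧ u + v = w := by
  have hwle : w ≤ x + y := (le_abs_self w).trans hw
  have hwge : -w ≤ x + y := by
    have := (le_abs_self (-w)).trans (by rwa [abs_neg] : |(-w)| ≤ x + y)
    exact this
  have key1 : w - y ≤ (w ⊔ (-x)) ⊓ x := by
    refine le_inf ((sub_le_self w hy).trans le_sup_left) ?_
    rwa [sub_le_iff_le_add]
  have key2 : (w ⊔ (-x)) ⊓ x ≤ w + y := by
    refine inf_le_left.trans (sup_le (le_add_of_nonneg_right hy) ?_)
    have h' : -(x + y) ≤ w := neg_le.1 hwge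
    have h'' : -x - y ≤ w := by rw [show -x - y = -(x+y) by abel]; exact h'
    exact sub_le_iff_le_add.1 h''
  refine ⟨(w ⊔ (-x)) ⊓ x, w - (w ⊔ (-x)) ⊓ x, ?_, ?_, by abel⟩
  · refine abs_le'.2 ⟨inf_le_right, ?_⟩
    rw [neg_le]
    exact le_inf le_sup_right ((neg_nonpos.2 hx).trans hx)
  · refine abs_le'.2 ⟨?_, ?_⟩
    · rwa [sub_le_comm] at key1
    · rw [neg_sub, sub_le_iff_le_add, add_comm]
      exact key2

/-- The set whose sup defines `|f| x` for `x ≥ 0`. -/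
def absSet (f : E →L[ℝ] ℝ) (x : E) : Set ℝ := {r : ℝ | ∃ w : E, |w| ≤ x ∧ r = f w}

lemma absSet_bdd (f : E →L[ℝ] ℝ) (x : E) : BddAbove (absSet f x) := by
  refine ⟨‖f‖ * ‖x‖, ?_⟩
  rintro r ⟨w, hw, rfl⟩
  have h1 : ‖w‖ ≤ ‖x‖ := by
    refine norm_le_norm_of_abs_le_abs (hw.trans (le_abs_self x))
  calc f w ≤ |f w| := le_abs_self _
    _ ≤ ‖f‖ * ‖w‖ := f.le_opNorm w
    _ ≤ ‖f‖ * ‖x‖ := by gcongr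

lemma absSet_mem (f : E →L[ℝ] ℝ) {x : E} (hx : 0 ≤ x) : (0 : ℝ) ∈ absSet f x :=
  ⟨0, by simpa using hx, by simp⟩

noncomputable def pf (f : E →L[ℝ] ℝ) (x : E) : ℝ := sSup (absSet f x)

lemma le_pf (f : E →L[ℝ] ℝ) {w x : E} (h : |w| ≤ x) : f w ≤ pf f x :=
  le_csSup (absSet_bdd f x) ⟨w, h, rfl⟩

lemma pf_nonneg (f : E →L[ℝ] ℝ) {x : E} (hx : 0 ≤ x) : 0 ≤ pf f x :=
  le_csSup (absSet_bdd f x) (absSet_mem f hx)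

lemma pf_le (f : E →L[ℝ] ℝ) {x : E} (hx : 0 ≤ x) : pf f x ≤ ‖f‖ * ‖x‖ := by
  refine csSup_le ⟨0, absSet_mem f hx⟩ ?_
  rintro r ⟨w, hw, rfl⟩
  have h1 : ‖w‖ ≤ ‖x‖ := norm_le_norm_of_abs_le_abs (hw.trans (le_abs_self x))
  calc f w ≤ |f w| := le_abs_self _
    _ ≤ ‖f‖ * ‖w‖ := f.le_opNorm w
    _ ≤ ‖f‖ * ‖x‖ := by gcongr

lemma pf_zero (f : E →L[ℝ] ℝ) : pf f 0 = 0 :=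
  le_antisymm (by simpa using pf_le f le_rfl) (pf_nonneg f le_rfl)

lemma pf_add (f : E →L[ℝ] ℝ) {x y : E} (hx : 0 ≤ x) (hy : 0 ≤ y) :
    pf f (x + y) = pf f x + pf f y := by
  refine le_antisymm ?_ ?_
  · refine csSup_le ⟨0, absSet_mem f (add_nonneg hx hy)⟩ ?_
    rintro r ⟨w, hw, rfl⟩
    obtain ⟨u, v, hu, hv, huv⟩ := riesz_decomp hx hy hw
    have : f w = f u + f v := by rw [← huv]; simp
    rw [this]
    exact add_le_add (le_pf f hu) (le_pf f hv)
  · have key : ∀ r ∈ absSet f x, ∀ s ∈ absSet f y, r + s ≤ pf f (x + y) := by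
      rintro r ⟨u, hu, rfl⟩ s ⟨v, hv, rfl⟩
      have : f u + f v = f (u + v) := (map_add f u v).symm
      rw [this]
      exact le_pf f ((abs_add_le u v).trans (add_le_add hu hv))
    have h1 : pf f x ≤ pf f (x + y) - pf f y := by
      refine csSup_le ⟨0, absSet_mem f hx⟩ fun r hr => le_sub_iff_add_le.2 ?_
      rw [add_comm]
      refine le_sub_iff_add_le.1 (csSup_le ⟨0, absSet_mem f hy⟩ fun s hs => ?_)
      exact le_sub_iff_add_le.2 (by linarith [key r hr s hs])
    linarith

noncomputable def pm (f : E →L[ℝ] ℝ) (x : E) : ℝ := pf f (x⁺) - pf f (x⁻)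

lemma pm_of_nonneg (f : E →L[ℝ] ℝ) {x : E} (hx : 0 ≤ x) : pm f x = pf f x := by
  rw [pm, posPart_eq_self.2 hx, negPart_eq_zero.2 hx, pf_zero, sub_zero]

lemma pm_add (f : E →L[ℝ] ℝ) (x y : E) : pm f (x + y) = pm f x + pm f y := by
  have h1 := posPart_sub_negPart (x + y)
  have h2 := posPart_sub_negPart x
  have h3 := posPart_sub_negPart y
  have key : (x + y)⁺ + (x⁻ + y⁻) = (x⁺ + y⁺) + (x + y)⁻ := by
    have h4 : (x + y)⁺ - (x + y)⁻ = (x⁺ + y⁺) - (x⁻ + y⁻) := by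
      rw [h1, show (x⁺ + y⁺) - (x⁻ + y⁻) = (x⁺ - x⁻) + (y⁺ - y⁻) by abel, h2, h3]
    exact sub_eq_sub_iff_add_eq_add.mp h4
  have e1 := congrArg (pf f) key
  rw [pf_add f (posPart_nonneg _) (add_nonneg (negPart_nonneg x) (negPart_nonneg y)),
      pf_add f (negPart_nonneg x) (negPart_nonneg y),
      pf_add f (add_nonneg (posPart_nonneg x) (posPart_nonneg y)) (negPart_nonneg _),
      pf_add f (posPart_nonneg x) (posPart_nonneg y)] at e1
  simp only [pm]
  linarith

lemma pm_nonneg (f : E →L[ℝ] ℝ) {x : E} (hx : 0 ≤ x) : 0 ≤ pm f x := by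
  rw [pm_of_nonneg f hx]; exact pf_nonneg f hx

lemma pm_bound (f : E →L[ℝ] ℝ) (x : E) : |pm f x| ≤ 2 * ‖f‖ * ‖x‖ := by
  have hp : ‖x⁺‖ ≤ ‖x‖ := by
    refine norm_le_norm_of_abs_le_abs ?_
    rw [abs_of_nonneg (posPart_nonneg x), ← posPart_add_negPart x]
    exact le_add_of_nonneg_right (negPart_nonneg x)
  have hn : ‖x⁻‖ ≤ ‖x‖ := by
    refine norm_le_norm_of_abs_le_abs ?_
    rw [abs_of_nonneg (negPart_nonneg x), ← posPart_add_negPart x]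
    exact le_add_of_nonneg_left (posPart_nonneg x)
  have b1 := pf_le f (posPart_nonneg x)
  have b2 := pf_le f (negPart_nonneg x)
  have n1 := pf_nonneg f (posPart_nonneg x)
  have n2 := pf_nonneg f (negPart_nonneg x)
  have hf : 0 ≤ ‖f‖ := norm_nonneg f
  rw [abs_le]
  constructor <;> simp only [pm] <;> nlinarith

lemma pm_continuous (f : E →L[ℝ] ℝ) : Continuous (pm f) := by
  have hlip : LipschitzWith (Real.toNNReal (2 * ‖f‖)) (pm f) := by
    refine LipschitzWith.of_dist_le_mul fun a b => ?_
    have h1 : pm f a - pm f b = pm f (a - b) := by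
      have := pm_add f (a - b) b
      simp only [sub_add_cancel] at this
      linarith
    rw [Real.dist_eq, dist_eq_norm, h1]
    calc |pm f (a - b)| ≤ 2 * ‖f‖ * ‖a - b‖ := pm_bound f (a - b)
      _ ≤ (Real.toNNReal (2 * ‖f‖) : ℝ) * ‖a - b‖ := by
          gcongr
          exact Real.le_coe_toNNReal _
  exact hlip.continuous

noncomputable def absCLM (f : E →L[ℝ] ℝ) : E →L[ℝ] ℝ :=
  AddMonoidHom.toRealLinearMap (AddMonoidHom.mk' (pm f) (pm_add f)) (pm_continuous f)

lemma absCLM_apply (f : E →L[ℝ] ℝ) (x : E) : absCLM f x = pm f x := rfl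


end Aux

/-- If a Banach lattice `E` has property (d) and the positive
Grothendieck property, then `E` has the disjoint Grothendieck property. -/
theorem disjoint_grothendieck_of_d_and_positive_grothendieck
    {E : Type*} [NormedAddCommGroup E] [Lattice E] [HasSolidNorm E]
    [IsOrderedAddMonoid E] [NormedSpace ℝ E] [CompleteSpace E]
    -- property (d)
    (hd : ∀ f : ℕ → E →L[ℝ] ℝ,
      (∀ n m, n ≠ m → DualDisjoint (f n) (f m)) →
      (∀ x : E, Tendsto (fun n => f n x) atTop (𝓝 0)) →
      ∀ x : E, 0 ≤ x →
        Tendsto (fun n => sSup {r : ℝ | ∃ w : E, |w| ≤ x ∧ r = f n w}) atTop (𝓝 0))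
    -- positive Grothendieck property
    (hPG : ∀ f : ℕ → E →L[ℝ] ℝ,
      (∀ n, ∀ x : E, 0 ≤ x → 0 ≤ f n x) →
      (∀ x : E, Tendsto (fun n => f n x) atTop (𝓝 0)) →
      ∀ Φ : (E →L[ℝ] ℝ) →L[ℝ] ℝ, Tendsto (fun n => Φ (f n)) atTop (𝓝 0)) :
    -- disjoint Grothendieck property
    ∀ f : ℕ → E →L[ℝ] ℝ,
      (∀ n m, n ≠ m → DualDisjoint (f n) (f m)) →
      (∀ x : E, Tendsto (fun n => f n x) atTop (𝓝 0)) →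
      ∀ Φ : (E →L[ℝ] ℝ) →L[ℝ] ℝ, Tendsto (fun n => Φ (f n)) atTop (𝓝 0) := by
  intro f hdisj hnull Φ
  have hpos : ∀ x : E, 0 ≤ x → Tendsto (fun n => pf (f n) x) atTop (𝓝 0) := by
    intro x hx
    have := hd f hdisj hnull x hx
    simpa [pf, absSet] using this
  have habs_null : ∀ x : E, Tendsto (fun n => absCLM (f n) x) atTop (𝓝 0) := by
    intro x
    have heq : (fun n => absCLM (f n) x) = fun n => pf (f n) (x⁺) - pf (f n) (x⁻) := rfl
    rw [heq]
    simpa using (hpos (x⁺) (posPart_nonneg x)).sub (hpos (x⁻) (negPart_nonneg x))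
  have h1 : Tendsto (fun n => Φ (absCLM (f n))) atTop (𝓝 0) :=
    hPG (fun n => absCLM (f n)) (fun n x hx => pm_nonneg (f n) hx) habs_null Φ
  have h2 : Tendsto (fun n => Φ (absCLM (f n) + f n)) atTop (𝓝 0) := by
    refine hPG _ (fun n x hx => ?_) (fun x => ?_) Φ
    · simp only [ContinuousLinearMap.add_apply]
      have hle : f n (-x) ≤ pf (f n) x := le_pf (f n) (by rw [abs_neg, abs_of_nonneg hx])
      rw [map_neg] at hle
      have h' : absCLM (f n) x = pf (f n) x := pm_of_nonneg (f n) hx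
      rw [h']
      linarith
    · simpa using (habs_null x).add (hnull x)
  have heq2 : (fun n => Φ (f n)) = fun n => Φ (absCLM (f n) + f n) - Φ (absCLM (f n)) := by
    funext n
    rw [map_add]
    ring
  rw [heq2]
  simpa using h2.sub h1
end

section
/- Let E, F be Banach lattices and T : E → F a continuous, interval preserving, order L-weakly compact operator. Then for every y ≥ 0 in the ideal of F generated by the range of T (i.e., such that y ≤ Σ_{i=1}^k |T y_i| for some finitely many y₁, …, y_k ∈ E), every disjoint sequence (x_n) in F with 0 ≤ x_n ≤ y for all n is norm null. (Consequently the norm closure of the ideal generated by T(E) is a Banach lattice with order continuous norm.) -/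
open Filter Topology

/-- A norm-bounded set `L` in a Banach lattice is an LW-set if every disjoint
sequence in the solid hull of `L` is norm null. -/
def IsLWSet {F : Type*} [NormedAddCommGroup F] [Lattice F] [HasSolidNorm F] [IsOrderedAddMonoid F] (L : Set F) : Prop :=
  Bornology.IsBounded L ∧
  ∀ y : ℕ → F, (∀ n, ∃ z ∈ L, |y n| ≤ |z|) →
    (∀ n m, n ≠ m → |y n| ⊓ |y m| = 0) →
    Tendsto (fun n => ‖y n‖) atTop (𝓝 0)

/-- If `T : E → F` is a continuous, interval preserving, order
L-weakly compact operator between Banach lattices, then for every `y ≥ 0` in the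
ideal of `F` generated by the range of `T`, every disjoint sequence in `[0, y]`
is norm null. -/
theorem disjoint_seq_norm_null_in_ideal_of_oLW
    {E F : Type*} [NormedAddCommGroup E] [Lattice E] [HasSolidNorm E] [IsOrderedAddMonoid E] [NormedSpace ℝ E] [CompleteSpace E]
    [NormedAddCommGroup F] [Lattice F] [HasSolidNorm F] [IsOrderedAddMonoid F] [NormedSpace ℝ F] [CompleteSpace F]
    (T : E →L[ℝ] F)
    -- T is positive and interval preserving
    (hpos : ∀ x : E, 0 ≤ x → 0 ≤ T x)
    (hip : ∀ x : E, 0 ≤ x → T '' Set.Icc 0 x = Set.Icc 0 (T x))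
    -- T is order L-weakly compact
    (hoLW : ∀ A : Set E, (∃ a b : E, A ⊆ Set.Icc a b) → IsLWSet (T '' A)) :
    ∀ y : F, 0 ≤ y →
      (∃ (k : ℕ) (ys : Fin k → E), y ≤ ∑ i, |T (ys i)|) →
      ∀ x : ℕ → F, (∀ n, 0 ≤ x n ∧ x n ≤ y) →
        (∀ n m, n ≠ m → |x n| ⊓ |x m| = 0) →
        Tendsto (fun n => ‖x n‖) atTop (𝓝 0) := by
  rintro y hy ⟨k, ys, hys⟩ x hx hdisj
  -- u = sum of |ys i|
  set u : E := ∑ i, |ys i| with hu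
  have hu0 : (0:E) ≤ u := Finset.sum_nonneg fun i _ => abs_nonneg _
  -- |T v| ≤ T |v|
  have habs : ∀ v : E, |T v| ≤ T |v| := by
    intro v
    have h1 : T v ≤ T |v| := by
      have := hpos (|v| - v) (sub_nonneg.2 (le_abs_self v))
      simpa [map_sub, sub_nonneg] using this
    have h2 : -T v ≤ T |v| := by
      have h := hpos (|v| + v) (by rw [← sub_neg_eq_add]; exact sub_nonneg.2 (neg_le_abs v))
      rw [map_add] at h
      rw [← sub_nonneg, sub_neg_eq_add]
      exact h
    exact abs_le'.2 ⟨h1, h2⟩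
  have hyTu : y ≤ T u := by
    calc y ≤ ∑ i, |T (ys i)| := hys
      _ ≤ ∑ i, T |ys i| := Finset.sum_le_sum fun i _ => habs (ys i)
      _ = T u := by rw [hu, map_sum]
  -- x n ∈ T '' Icc 0 u
  have hmem : ∀ n, x n ∈ T '' Set.Icc 0 u := by
    intro n
    rw [hip u hu0]
    exact ⟨(hx n).1, le_trans (hx n).2 hyTu⟩
  have hLW := hoLW (Set.Icc 0 u) ⟨0, u, le_refl _⟩
  exact hLW.2 x (fun n => ⟨x n, hmem n, le_refl _⟩) hdisj
end

section
/- Let E, F be Banach lattices and 𝒫 a linear subspace of the space L(E,F) of continuous linear operators that is closed with respect to the operator norm. If (T_n) is a sequence of regularly-𝒫 operators that is Cauchy with respect to the enveloping norm ‖T‖_{r-𝒫} = inf{ ‖S‖ : S ∈ 𝒫, −S ≤ T ≤ S }, then there exists a regularly-𝒫 operator T with ‖T − T_n‖_{r-𝒫} → 0; that is, r-𝒫(E,F) is a Banach space under the enveloping norm. -/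
open Filter Topology

section EnvelopingNorm

variable {E F : Type*} [NormedAddCommGroup E] [Lattice E] [HasSolidNorm E]
  [IsOrderedAddMonoid E] [NormedSpace ℝ E]
  [NormedAddCommGroup F] [Lattice F] [HasSolidNorm F]
  [IsOrderedAddMonoid F] [NormedSpace ℝ F]

/-- `S` dominates `±T`, i.e. `-S ≤ T ≤ S` in the operator order. -/
def OpDominates (S T : E →L[ℝ] F) : Prop :=
  ∀ x : E, 0 ≤ x → -(S x) ≤ T x ∧ T x ≤ S x

/-- A positive operator. -/
def IsPositiveOp (T : E →L[ℝ] F) : Prop :=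
  ∀ x : E, 0 ≤ x → 0 ≤ T x

/-- `T` is a regularly-`𝒫` operator: a difference of two positive members of `𝒫`. -/
def IsRegP (P : Set (E →L[ℝ] F)) (T : E →L[ℝ] F) : Prop :=
  ∃ T₁ T₂ : E →L[ℝ] F, T₁ ∈ P ∧ T₂ ∈ P ∧ IsPositiveOp T₁ ∧ IsPositiveOp T₂ ∧ T = T₁ - T₂

/-- The enveloping norm `‖T‖_{r-𝒫} = inf{‖S‖ : S ∈ 𝒫, ±T ≤ S}`. -/
noncomputable def envNorm (P : Set (E →L[ℝ] F)) (T : E →L[ℝ] F) : ℝ :=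
  sInf {r : ℝ | ∃ S ∈ P, OpDominates S T ∧ r = ‖S‖}

end EnvelopingNorm


section AuxLemmas

variable {E F : Type*} [NormedAddCommGroup E] [Lattice E] [HasSolidNorm E]
  [IsOrderedAddMonoid E] [NormedSpace ℝ E]
  [NormedAddCommGroup F] [Lattice F] [HasSolidNorm F]
  [IsOrderedAddMonoid F] [NormedSpace ℝ F]

namespace Aux

omit [NormedSpace ℝ F] in
lemma nonneg_of_neg_le {a : F} (h : -a ≤ a) : 0 ≤ a := by
  have : |a| = a := by rw [abs]; exact sup_eq_left.mpr h
  rw [← this]; exact abs_nonneg a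

lemma dom_pos {S T : E →L[ℝ] F} (h : OpDominates S T) : IsPositiveOp S :=
  fun x hx => nonneg_of_neg_le (le_trans (h x hx).1 (h x hx).2)

lemma norm_apply_le_of_dom {S T : E →L[ℝ] F} (h : OpDominates S T) {x : E} (hx : 0 ≤ x) :
    ‖T x‖ ≤ ‖S x‖ := by
  obtain ⟨h1, h2⟩ := h x hx
  have hS : 0 ≤ S x := dom_pos h x hx
  apply norm_le_norm_of_abs_le_abs
  rw [abs_of_nonneg hS]
  exact abs_le'.mpr ⟨h2, neg_le.mp h1⟩

omit [NormedSpace ℝ E] [NormedSpace ℝ F] in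
lemma part_norm_le (x : E) : ‖x⁺‖ ≤ ‖x‖ ∧ ‖x⁻‖ ≤ ‖x‖ := by
  constructor <;> apply norm_le_norm_of_abs_le_abs
  · have h : x⁺ ≤ |x| := by rw [posPart_def]; exact sup_le (le_abs_self x) (abs_nonneg x)
    rwa [abs_of_nonneg (posPart_nonneg x)]
  · have h : x⁻ ≤ |x| := by rw [negPart_def]; exact sup_le (neg_le_abs x) (abs_nonneg x)
    rwa [abs_of_nonneg (negPart_nonneg x)]

lemma norm_le_of_dom {S T : E →L[ℝ] F} (h : OpDominates S T) : ‖T‖ ≤ 2 * ‖S‖ := by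
  have hS0 : (0:ℝ) ≤ 2 * ‖S‖ := by positivity
  apply ContinuousLinearMap.opNorm_le_bound _ hS0
  intro x
  calc ‖T x‖ = ‖T x⁺ - T x⁻‖ := by rw [← map_sub, posPart_sub_negPart]
    _ ≤ ‖T x⁺‖ + ‖T x⁻‖ := norm_sub_le _ _
    _ ≤ ‖S x⁺‖ + ‖S x⁻‖ :=
        add_le_add (norm_apply_le_of_dom h (posPart_nonneg x)) (norm_apply_le_of_dom h (negPart_nonneg x))
    _ ≤ ‖S‖ * ‖x⁺‖ + ‖S‖ * ‖x⁻‖ := add_le_add (S.le_opNorm _) (S.le_opNorm _)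
    _ ≤ ‖S‖ * ‖x‖ + ‖S‖ * ‖x‖ := by
        have h1 := part_norm_le x
        gcongr <;> [exact h1.1; exact h1.2]
    _ = 2 * ‖S‖ * ‖x‖ := by ring

/-- the set defining envNorm -/
def DSet (P : Set (E →L[ℝ] F)) (T : E →L[ℝ] F) : Set ℝ :=
  {r : ℝ | ∃ S ∈ P, OpDominates S T ∧ r = ‖S‖}

lemma envNorm_eq (P : Set (E →L[ℝ] F)) (T : E →L[ℝ] F) : envNorm P T = sInf (DSet P T) := rfl

lemma DSet_bddBelow (P : Set (E →L[ℝ] F)) (T : E →L[ℝ] F) : BddBelow (DSet P T) :=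
  ⟨0, fun r ⟨S, _, _, hr⟩ => hr ▸ norm_nonneg S⟩

lemma envNorm_nonneg (P : Set (E →L[ℝ] F)) (T : E →L[ℝ] F) : 0 ≤ envNorm P T :=
  Real.sInf_nonneg (fun r ⟨S, _, _, hr⟩ => hr ▸ norm_nonneg S)

lemma envNorm_le {P : Set (E →L[ℝ] F)} {S T : E →L[ℝ] F} (hS : S ∈ P) (hdom : OpDominates S T) :
    envNorm P T ≤ ‖S‖ :=
  csInf_le (DSet_bddBelow P T) ⟨S, hS, hdom, rfl⟩

lemma regP_dom_exists {P : Submodule ℝ (E →L[ℝ] F)} {T : E →L[ℝ] F}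
    (h : IsRegP (P : Set (E →L[ℝ] F)) T) : ∃ S ∈ (P : Set (E →L[ℝ] F)), OpDominates S T := by
  obtain ⟨T₁, T₂, h₁, h₂, hp₁, hp₂, rfl⟩ := h
  refine ⟨T₁ + T₂, P.add_mem h₁ h₂, fun x hx => ?_⟩
  have a1 := hp₁ x hx; have a2 := hp₂ x hx
  simp only [ContinuousLinearMap.add_apply, ContinuousLinearMap.sub_apply]
  constructor
  · rw [neg_add, sub_eq_add_neg]
    exact add_le_add_left (neg_le_self a1) _
  · rw [sub_eq_add_neg]
    exact add_le_add_right ((neg_nonpos_of_nonneg a2).trans a2) _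

lemma IsRegP.sub {P : Submodule ℝ (E →L[ℝ] F)} {A B : E →L[ℝ] F}
    (hA : IsRegP (P : Set (E →L[ℝ] F)) A) (hB : IsRegP (P : Set (E →L[ℝ] F)) B) :
    IsRegP (P : Set (E →L[ℝ] F)) (A - B) := by
  obtain ⟨A₁, A₂, m1, m2, p1, p2, rfl⟩ := hA
  obtain ⟨B₁, B₂, m3, m4, p3, p4, rfl⟩ := hB
  exact ⟨A₁ + B₂, A₂ + B₁, P.add_mem m1 m4, P.add_mem m2 m3,
    fun x hx => add_nonneg (p1 x hx) (p4 x hx), fun x hx => add_nonneg (p2 x hx) (p3 x hx),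
    by abel⟩

lemma IsRegP.add {P : Submodule ℝ (E →L[ℝ] F)} {A B : E →L[ℝ] F}
    (hA : IsRegP (P : Set (E →L[ℝ] F)) A) (hB : IsRegP (P : Set (E →L[ℝ] F)) B) :
    IsRegP (P : Set (E →L[ℝ] F)) (A + B) := by
  obtain ⟨A₁, A₂, m1, m2, p1, p2, rfl⟩ := hA
  obtain ⟨B₁, B₂, m3, m4, p3, p4, rfl⟩ := hB
  exact ⟨A₁ + B₁, A₂ + B₂, P.add_mem m1 m3, P.add_mem m2 m4,
    fun x hx => add_nonneg (p1 x hx) (p3 x hx), fun x hx => add_nonneg (p2 x hx) (p4 x hx),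
    by abel⟩

lemma regP_of_mem_dom {P : Submodule ℝ (E →L[ℝ] F)} {S T : E →L[ℝ] F}
    (hT : T ∈ P) (hS : S ∈ P) (hdom : OpDominates S T) : IsRegP (P : Set (E →L[ℝ] F)) T :=
  ⟨S + T, S, P.add_mem hS hT, hS,
    fun x hx => by
      simpa using add_le_add_right (hdom x hx).1 (S x),
    dom_pos hdom, by abel⟩

lemma envNorm_add_le {P : Submodule ℝ (E →L[ℝ] F)} {A B : E →L[ℝ] F}
    (hA : ∃ S ∈ (P : Set (E →L[ℝ] F)), OpDominates S A)
    (hB : ∃ S ∈ (P : Set (E →L[ℝ] F)), OpDominates S B) :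
    envNorm (P : Set (E →L[ℝ] F)) (A + B) ≤
      envNorm (P : Set (E →L[ℝ] F)) A + envNorm (P : Set (E →L[ℝ] F)) B := by
  set Ps := (P : Set (E →L[ℝ] F))
  have hneA : (DSet Ps A).Nonempty := by obtain ⟨S, h1, h2⟩ := hA; exact ⟨‖S‖, S, h1, h2, rfl⟩
  have hneB : (DSet Ps B).Nonempty := by obtain ⟨S, h1, h2⟩ := hB; exact ⟨‖S‖, S, h1, h2, rfl⟩
  have key : ∀ a ∈ DSet Ps A, ∀ b ∈ DSet Ps B, envNorm Ps (A + B) ≤ a + b := by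
    rintro a ⟨S₁, hS₁, hd₁, rfl⟩ b ⟨S₂, hS₂, hd₂, rfl⟩
    have hdom : OpDominates (S₁ + S₂) (A + B) := by
      intro x hx
      obtain ⟨u1, u2⟩ := hd₁ x hx; obtain ⟨v1, v2⟩ := hd₂ x hx
      simp only [ContinuousLinearMap.add_apply]
      constructor <;> [skip; exact add_le_add u2 v2]
      rw [neg_add]; exact add_le_add u1 v1
    exact le_trans (envNorm_le (P.add_mem hS₁ hS₂) hdom) (norm_add_le _ _)
  have step1 : ∀ a ∈ DSet Ps A, envNorm Ps (A + B) - a ≤ envNorm Ps B := by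
    intro a ha
    apply le_csInf hneB
    intro b hb
    linarith [key a ha b hb]
  have : envNorm Ps (A + B) - envNorm Ps B ≤ envNorm Ps A := by
    apply le_csInf hneA
    intro a ha
    linarith [step1 a ha]
  linarith

lemma norm_le_two_envNorm {P : Submodule ℝ (E →L[ℝ] F)} {T : E →L[ℝ] F}
    (h : ∃ S ∈ (P : Set (E →L[ℝ] F)), OpDominates S T) :
    ‖T‖ ≤ 2 * envNorm (P : Set (E →L[ℝ] F)) T := by
  have hne : (DSet (P : Set (E →L[ℝ] F)) T).Nonempty := by
    obtain ⟨S, h1, h2⟩ := h; exact ⟨‖S‖, S, h1, h2, rfl⟩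
  have : ‖T‖ / 2 ≤ envNorm (P : Set (E →L[ℝ] F)) T := by
    apply le_csInf hne
    rintro r ⟨S, _, hdom, rfl⟩
    linarith [norm_le_of_dom hdom]
  linarith

end Aux

end AuxLemmas

set_option maxHeartbeats 1000000 in
/-- If `𝒫` is an operator-norm-closed linear subspace of `L(E,F)`,
then every sequence of regularly-`𝒫` operators that is Cauchy for the enveloping
norm converges, in the enveloping norm, to a regularly-`𝒫` operator; that is,
`r-𝒫(E,F)` is a Banach space under the enveloping norm. -/
theorem regP_complete_under_envNorm
    {E F : Type*} [NormedAddCommGroup E] [Lattice E] [HasSolidNorm E]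
  [IsOrderedAddMonoid E] [NormedSpace ℝ E] [CompleteSpace E]
    [NormedAddCommGroup F] [Lattice F] [HasSolidNorm F]
  [IsOrderedAddMonoid F] [NormedSpace ℝ F] [CompleteSpace F]
    (P : Submodule ℝ (E →L[ℝ] F)) (hP : IsClosed (P : Set (E →L[ℝ] F)))
    (T : ℕ → E →L[ℝ] F) (hT : ∀ n, IsRegP (P : Set (E →L[ℝ] F)) (T n))
    (hCauchy : ∀ ε : ℝ, 0 < ε → ∃ N : ℕ, ∀ m ≥ N, ∀ n ≥ N,
      envNorm (P : Set (E →L[ℝ] F)) (T m - T n) < ε) :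
    ∃ S : E →L[ℝ] F, IsRegP (P : Set (E →L[ℝ] F)) S ∧
      Tendsto (fun n => envNorm (P : Set (E →L[ℝ] F)) (S - T n)) atTop (𝓝 0) := by
  classical
  set Ps := (P : Set (E →L[ℝ] F)) with hPs
  have hTP : ∀ m, T m ∈ Ps := by
    intro m; obtain ⟨A, B, h1, h2, _, _, heq⟩ := hT m; rw [heq]; exact P.sub_mem h1 h2
  have hdomTm : ∀ m k, ∃ S ∈ Ps, OpDominates S (T m - T k) :=
    fun m k => Aux.regP_dom_exists (Aux.IsRegP.sub (hT m) (hT k))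
  choose N hNspec using fun k : ℕ => hCauchy ((1/2)^k) (by positivity)
  set n : ℕ → ℕ := fun k => (Finset.range (k+1)).sup N with hn_def
  have hn : ∀ j k, j ≤ k → N j ≤ n k := fun j k h =>
    Finset.le_sup (Finset.mem_range.mpr (Nat.lt_succ_of_le h))
  have hstep : ∀ k, envNorm Ps (T (n (k+1)) - T (n k)) < (1/2)^k := fun k =>
    hNspec k _ (hn k (k+1) (by omega)) _ (hn k k le_rfl)
  have hSk : ∀ k, ∃ Sk ∈ Ps, OpDominates Sk (T (n (k+1)) - T (n k)) ∧ ‖Sk‖ < (1/2)^k := by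
    intro k
    have hne : (Aux.DSet Ps (T (n (k+1)) - T (n k))).Nonempty := by
      obtain ⟨S, h1, h2⟩ := hdomTm (n (k+1)) (n k); exact ⟨‖S‖, S, h1, h2, rfl⟩
    obtain ⟨r, hr, hrlt⟩ := exists_lt_of_csInf_lt hne (hstep k)
    obtain ⟨Sk, h1, h2, rfl⟩ := hr
    exact ⟨Sk, h1, h2, hrlt⟩
  choose Sk hSkP hSkdom hSknorm using hSk
  have hSkpos : ∀ k, IsPositiveOp (Sk k) := fun k => Aux.dom_pos (hSkdom k)
  have hgeom : Summable (fun k : ℕ => ((1:ℝ)/2)^k) :=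
    summable_geometric_of_lt_one (by norm_num) (by norm_num)
  have hSknorm_sum : Summable (fun k => ‖Sk k‖) :=
    Summable.of_nonneg_of_le (fun k => norm_nonneg _) (fun k => (hSknorm k).le) hgeom
  have hSksum : Summable Sk := hSknorm_sum.of_norm
  have htail : ∀ k : ℕ, Summable (fun j => Sk (j + k)) :=
    fun k => (summable_nat_add_iff k).mpr hSksum
  have htailnorm : ∀ k : ℕ, Summable (fun j => ‖Sk (j + k)‖) :=
    fun k => (summable_nat_add_iff k).mpr hSknorm_sum
  have hgeomtail : ∀ k : ℕ, Summable (fun j : ℕ => ((1:ℝ)/2)^(j+k)) :=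
    fun k => (summable_nat_add_iff k).mpr hgeom
  set U : ℕ → E →L[ℝ] F := fun k => ∑' j, Sk (j + k) with hU_def
  have hUmem : ∀ k, U k ∈ Ps := by
    intro k
    apply hP.mem_of_tendsto (htail k).hasSum.tendsto_sum_nat
    exact Filter.Eventually.of_forall fun m => P.sum_mem fun j _ => hSkP (j + k)
  have hUnorm : ∀ k, ‖U k‖ ≤ 2 * (1/2)^k := by
    intro k
    calc ‖U k‖ ≤ ∑' j, ‖Sk (j + k)‖ := norm_tsum_le_tsum_norm (htailnorm k)
      _ ≤ ∑' j : ℕ, ((1:ℝ)/2)^(j+k) :=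
          Summable.tsum_le_tsum (fun j => (hSknorm (j+k)).le) (htailnorm k) (hgeomtail k)
      _ = (∑' j : ℕ, ((1:ℝ)/2)^j) * (1/2)^k := by
          simp_rw [pow_add]; exact tsum_mul_right
      _ = 2 * (1/2)^k := by
          rw [tsum_geometric_of_lt_one (by norm_num) (by norm_num)]; norm_num
  -- convergence of T ∘ n in operator norm
  have hcs : CauchySeq (fun k => T (n k)) := by
    apply cauchySeq_of_summable_dist
    refine Summable.of_nonneg_of_le (fun k => dist_nonneg) (fun k => ?_) (hgeom.mul_left 2)
    have : dist (T (n k)) (T (n (k+1))) = ‖T (n (k+1)) - T (n k)‖ := by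
      rw [dist_eq_norm, norm_sub_rev]
    rw [this]
    calc ‖T (n (k+1)) - T (n k)‖ ≤ 2 * ‖Sk k‖ := Aux.norm_le_of_dom (hSkdom k)
      _ ≤ 2 * (1/2)^k := by nlinarith [hSknorm k, norm_nonneg (Sk k)]
  obtain ⟨Tinf, hconv⟩ := cauchySeq_tendsto_of_complete hcs
  have hTinfP : Tinf ∈ Ps :=
    hP.mem_of_tendsto hconv (Filter.Eventually.of_forall fun k => hTP (n k))
  -- domination of Tinf - T (n k) by U k
  have hUdom : ∀ k, OpDominates (U k) (Tinf - T (n k)) := by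
    intro k x hx
    set φ := ContinuousLinearMap.apply ℝ F x with hφ
    have hUapp : (∑' j, φ (Sk (j + k))) = φ (U k) := ((htail k).hasSum.mapL φ).tsum_eq
    have hsum_apply : Summable (fun j => φ (Sk (j + k))) := (htail k).mapL φ
    have h1 : Tendsto (fun m => T (n (m + k))) atTop (𝓝 Tinf) :=
      hconv.comp (tendsto_add_atTop_nat k)
    have h2 : Tendsto (fun m => T (n (m + k)) x) atTop (𝓝 (Tinf x)) :=
      (φ.continuous.tendsto Tinf).comp h1
    have h3 : Tendsto (fun m => T (n (m + k)) x - T (n k) x) atTop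
        (𝓝 (Tinf x - T (n k) x)) := h2.sub tendsto_const_nhds
    have htel : ∀ m : ℕ, T (n (m + k)) x - T (n k) x
        = ∑ j ∈ Finset.range m, (T (n (j + 1 + k)) x - T (n (j + k)) x) := by
      intro m
      rw [Finset.sum_range_sub (f := fun j => T (n (j + k)) x), Nat.zero_add]
    have hterm : ∀ j : ℕ, -(Sk (j + k) x) ≤ T (n (j + 1 + k)) x - T (n (j + k)) x
        ∧ T (n (j + 1 + k)) x - T (n (j + k)) x ≤ Sk (j + k) x := by
      intro j
      have := hSkdom (j + k) x hx
      simp only [ContinuousLinearMap.sub_apply] at this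
      rwa [show j + k + 1 = j + 1 + k by omega] at this
    have hupper : ∀ m : ℕ, T (n (m + k)) x - T (n k) x ≤ U k x := by
      intro m
      rw [htel m]
      calc ∑ j ∈ Finset.range m, (T (n (j + 1 + k)) x - T (n (j + k)) x)
          ≤ ∑ j ∈ Finset.range m, Sk (j + k) x :=
            Finset.sum_le_sum fun j _ => (hterm j).2
        _ ≤ ∑' j, φ (Sk (j + k)) :=
            Summable.sum_le_tsum _ (fun j _ => hSkpos (j + k) x hx) hsum_apply
        _ = U k x := hUapp
    have hlower : ∀ m : ℕ, -(U k x) ≤ T (n (m + k)) x - T (n k) x := by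
      intro m
      rw [htel m]
      have : -(U k x) ≤ -(∑ j ∈ Finset.range m, Sk (j + k) x) := by
        apply neg_le_neg
        calc ∑ j ∈ Finset.range m, Sk (j + k) x
            ≤ ∑' j, φ (Sk (j + k)) :=
              Summable.sum_le_tsum _ (fun j _ => hSkpos (j + k) x hx) hsum_apply
          _ = U k x := hUapp
      refine this.trans ?_
      rw [← Finset.sum_neg_distrib]
      exact Finset.sum_le_sum fun j _ => (hterm j).1
    constructor
    · simpa using ge_of_tendsto h3 (Filter.Eventually.of_forall hlower)
    · simpa using le_of_tendsto h3 (Filter.Eventually.of_forall hupper)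
  have hEnv : ∀ k, envNorm Ps (Tinf - T (n k)) ≤ 2 * (1/2)^k :=
    fun k => (Aux.envNorm_le (hUmem k) (hUdom k)).trans (hUnorm k)
  -- Tinf is regularly-P
  have hreg : IsRegP Ps Tinf := by
    have hV : IsRegP Ps (Tinf - T (n 0)) :=
      Aux.regP_of_mem_dom (P.sub_mem hTinfP (hTP (n 0))) (hUmem 0) (hUdom 0)
    have := Aux.IsRegP.add (hT (n 0)) hV
    rwa [show T (n 0) + (Tinf - T (n 0)) = Tinf by abel] at this
  refine ⟨Tinf, hreg, ?_⟩
  rw [Metric.tendsto_atTop]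
  intro ε hε
  obtain ⟨k, hk⟩ := exists_pow_lt_of_lt_one (show (0:ℝ) < ε/3 by linarith)
    (show (1:ℝ)/2 < 1 by norm_num)
  refine ⟨N k, fun m hm => ?_⟩
  have h1 : envNorm Ps (Tinf - T m) ≤ envNorm Ps (Tinf - T (n k)) + envNorm Ps (T (n k) - T m) := by
    have := Aux.envNorm_add_le (P := P) (A := Tinf - T (n k)) (B := T (n k) - T m)
      ⟨U k, hUmem k, hUdom k⟩ (hdomTm (n k) m)
    rwa [sub_add_sub_cancel] at this
  have h2 : envNorm Ps (T (n k) - T m) < (1/2)^k := hNspec k _ (hn k k le_rfl) m hm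
  rw [Real.dist_eq, sub_zero, abs_of_nonneg (Aux.envNorm_nonneg _ _)]
  have := hEnv k
  linarith
end

section
/- Let E, F be Banach lattices and assume the lattice operations in E′ are sequentially w*-continuous: for every w*-null sequence (g_n) in E′ and every x ≥ 0 in E one has sup{ g_n(w) : |w| ≤ x } → 0 (the moduli |g_n| are w*-null). Then every M-weakly compact operator T : E → F is limited: ‖T′ f_n‖ → 0 for every w*-null sequence (f_n) in F′. -/
set_option maxHeartbeats 1000000

open Filter Topology

section Aux
variable {E : Type*} [NormedAddCommGroup E] [Lattice E] [HasSolidNorm E]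
    [IsOrderedAddMonoid E] [NormedSpace ℝ E]

lemma aux_inf_add_le {a b c : E} (ha : 0 ≤ a) (hb : 0 ≤ b) (hc : 0 ≤ c) :
    a ⊓ (b + c) ≤ a ⊓ b + a ⊓ c := by
  rw [← sub_le_iff_le_add']
  have key : a ⊓ (b + c) - a ⊓ b = (a ⊓ (b + c) - a) ⊔ (a ⊓ (b + c) - b) := by
    rw [sub_eq_add_neg, neg_inf, add_sup, ← sub_eq_add_neg, ← sub_eq_add_neg]
  rw [key]
  apply sup_le
  · exact le_inf ((sub_nonpos.2 inf_le_left).trans ha) ((sub_nonpos.2 inf_le_left).trans hc)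
  · refine le_inf (sub_le_iff_le_add.2 ?_) (sub_le_iff_le_add.2 ?_)
    · exact inf_le_left.trans (by rw [add_comm]; exact le_add_of_nonneg_left hb)
    · exact inf_le_right.trans (by rw [add_comm])

lemma aux_inf_nsmul {a b : E} (ha : 0 ≤ a) (hb : 0 ≤ b) (hab : a ⊓ b = 0) (n : ℕ) :
    a ⊓ (n • b) = 0 := by
  induction n with
  | zero => simpa using inf_eq_right.2 ha
  | succ n ih =>
      refine le_antisymm ?_ (le_inf ha (nsmul_nonneg hb _))
      calc a ⊓ ((n + 1) • b) = a ⊓ (n • b + b) := by rw [succ_nsmul]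
        _ ≤ a ⊓ (n • b) + a ⊓ b := aux_inf_add_le ha (nsmul_nonneg hb n) hb
        _ = 0 := by rw [ih, hab, add_zero]

lemma aux_nonneg_of_nsmul {y : E} {n : ℕ} (hn : 0 < n) (h : 0 ≤ n • y) : 0 ≤ y := by
  have hyd : y⁺ ⊓ y⁻ = 0 := posPart_inf_negPart_eq_zero y
  have h1 : n • y⁻ ≤ n • y⁺ := by
    have heq : n • y = n • y⁺ - n • y⁻ := by rw [← nsmul_sub, posPart_sub_negPart]
    rw [heq, sub_nonneg] at h
    exact h
  have h2 : y⁻ ≤ n • y⁻ := by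
    calc y⁻ = 1 • y⁻ := (one_nsmul _).symm
      _ ≤ n • y⁻ := nsmul_le_nsmul_left (negPart_nonneg y) hn
  have h3 : y⁻ ⊓ (n • y⁺) = 0 :=
    aux_inf_nsmul (negPart_nonneg y) (posPart_nonneg y) (by rw [inf_comm]; exact hyd) n
  have h4 : y⁻ = 0 := by
    have := inf_eq_left.2 (h2.trans h1)
    rw [h3] at this; exact this.symm
  have := posPart_sub_negPart y
  rw [h4, sub_zero] at this
  rw [← this]; exact posPart_nonneg y

lemma aux_smul_nonneg {r : ℝ} (hr : 0 ≤ r) {x : E} (hx : 0 ≤ x) : 0 ≤ r • x := by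
  set q : ℕ → ℝ := fun n => (⌊r * 2 ^ n⌋₊ : ℝ) / 2 ^ n with hq
  have hqn : ∀ n, 0 ≤ q n • x := by
    intro n
    have h2 : (0:ℝ) < 2 ^ n := by positivity
    have : (2 ^ n : ℕ) • (q n • x) = (⌊r * 2 ^ n⌋₊ : ℕ) • x := by
      rw [← Nat.cast_smul_eq_nsmul ℝ, ← Nat.cast_smul_eq_nsmul ℝ, smul_smul]
      congr 1
      push_cast
      simp only [hq]
      field_simp
    exact aux_nonneg_of_nsmul (n := 2 ^ n) (by positivity)
      (by rw [this]; exact nsmul_nonneg hx _)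
  have hq_tendsto : Tendsto q atTop (𝓝 r) := by
    have hub : ∀ n, q n ≤ r := fun n => by
      rw [hq, div_le_iff₀ (by positivity)]
      exact Nat.floor_le (by positivity)
    have hlb : ∀ n, r - (2 ^ n)⁻¹ ≤ q n := fun n => by
      have h2 : (0:ℝ) < 2 ^ n := by positivity
      have hf := Nat.lt_floor_add_one (r * 2 ^ n)
      have hinv : ((2:ℝ)^n)⁻¹ * (2:ℝ)^n = 1 := inv_mul_cancel₀ h2.ne'
      have hip : (0:ℝ) < ((2:ℝ)^n)⁻¹ := by positivity
      show r - (2 ^ n)⁻¹ ≤ (⌊r * 2 ^ n⌋₊ : ℝ) / 2 ^ n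
      rw [div_eq_mul_inv]
      nlinarith [mul_pos (sub_pos.2 hf) hip, hinv]
    have hlow : Tendsto (fun n : ℕ => r - ((2:ℝ) ^ n)⁻¹) atTop (𝓝 r) := by
      have h0 : Tendsto (fun n : ℕ => ((2:ℝ) ^ n)⁻¹) atTop (𝓝 0) :=
        tendsto_inv_atTop_zero.comp (tendsto_pow_atTop_atTop_of_one_lt one_lt_two)
      simpa using tendsto_const_nhds.sub h0
    exact tendsto_of_tendsto_of_tendsto_of_le_of_le hlow tendsto_const_nhds hlb hub
  have : Tendsto (fun n => q n • x) atTop (𝓝 (r • x)) := hq_tendsto.smul_const x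
  exact le_of_tendsto_of_tendsto' tendsto_const_nhds this hqn

lemma aux_smul_mono {r : ℝ} (hr : 0 ≤ r) {x y : E} (hxy : x ≤ y) : r • x ≤ r • y := by
  have := aux_smul_nonneg hr (sub_nonneg.2 hxy)
  rw [smul_sub, sub_nonneg] at this
  exact this

lemma aux_smul_sup_zero {r : ℝ} (hr : 0 < r) (z : E) : r • (z ⊔ 0) = (r • z) ⊔ 0 := by
  have ge : ∀ (s : ℝ), 0 < s → ∀ w : E, (s • w) ⊔ 0 ≤ s • (w ⊔ 0) := by
    intro s hs w
    exact sup_le (aux_smul_mono hs.le le_sup_left)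
      (aux_smul_nonneg hs.le le_sup_right)
  refine le_antisymm ?_ (ge r hr z)
  have h2 := ge r⁻¹ (by positivity) (r • z)
  have h3 := aux_smul_mono hr.le h2
  rw [inv_smul_smul₀ (ne_of_gt hr), smul_inv_smul₀ (ne_of_gt hr)] at h3
  exact h3

lemma aux_key_disjoint {a b : E} (ha : 0 ≤ a) {t N : ℝ} (ht : 0 < t) (ht1 : t ≤ 1)
    (hNt : 1 ≤ N * t) : ((a - t • b) ⊔ 0) ⊓ ((b - N • a) ⊔ 0) = 0 := by
  set d := ((a - t • b) ⊔ 0) ⊓ ((b - N • a) ⊔ 0) with hd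
  have hd0 : 0 ≤ d := le_inf le_sup_right le_sup_right
  have h1 : t • d ≤ (a - t • b) ⊔ 0 := by
    calc t • d ≤ (1:ℝ) • d := by
          have := aux_smul_nonneg (sub_nonneg.2 ht1) hd0
          rw [sub_smul, sub_nonneg] at this
          exact this
      _ = d := one_smul _ _
      _ ≤ _ := inf_le_left
  have h2 : t • d ≤ (t • b - a) ⊔ 0 := by
    have ha' : a ≤ (t * N) • a := by
      have := aux_smul_nonneg (sub_nonneg.2 (by linarith [hNt] : (1:ℝ) ≤ t * N)) ha
      rw [sub_smul, one_smul, sub_nonneg] at this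
      exact this
    calc t • d ≤ t • ((b - N • a) ⊔ 0) := aux_smul_mono ht.le inf_le_right
      _ = (t • b - (t * N) • a) ⊔ 0 := by
          rw [aux_smul_sup_zero ht, smul_sub, smul_smul]
      _ ≤ (t • b - a) ⊔ 0 := sup_le_sup_right (sub_le_sub_left ha' _) _
  have h3 : t • d ≤ 0 := by
    have hpn : (a - t • b)⁺ ⊓ (a - t • b)⁻ = 0 := posPart_inf_negPart_eq_zero _
    rw [posPart_def, negPart_def, neg_sub] at hpn
    rw [← hpn]
    exact le_inf h1 h2
  have h4 : d ≤ 0 := by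
    have := aux_smul_mono (le_of_lt (inv_pos.2 ht)) h3
    rwa [smul_zero, inv_smul_smul₀ (ne_of_gt ht)] at this
  exact le_antisymm h4 hd0

end Aux


section Eps
variable {E F : Type*} [NormedAddCommGroup E] [Lattice E] [HasSolidNorm E]
    [IsOrderedAddMonoid E] [NormedSpace ℝ E] [CompleteSpace E]
  [NormedAddCommGroup F] [Lattice F] [HasSolidNorm F]
    [IsOrderedAddMonoid F] [NormedSpace ℝ F]

lemma aux_eps (T : E →L[ℝ] F)
    (hMW : ∀ x : ℕ → E, (∀ n m, n ≠ m → |x n| ⊓ |x m| = 0) →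
      (∃ C : ℝ, ∀ n, ‖x n‖ ≤ C) →
      Tendsto (fun n => ‖T (x n)‖) atTop (𝓝 0))
    {ε : ℝ} (hε : 0 < ε) :
    ∃ u : E, 0 ≤ u ∧ ∀ v : E, 0 ≤ v → ‖v‖ ≤ 1 → ‖T ((v - u) ⊔ 0)‖ ≤ ε := by
  classical
  by_contra hcon
  push_neg at hcon
  have H : ∀ u : E, 0 ≤ u → ∃ v : E, 0 ≤ v ∧ ‖v‖ ≤ 1 ∧ ε < ‖T ((v - u) ⊔ 0)‖ := hcon
  set pick : E → E := fun w => if h : 0 ≤ w then (H w h).choose else 0 with hpick_def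
  have hpick : ∀ w, 0 ≤ w →
      0 ≤ pick w ∧ ‖pick w‖ ≤ 1 ∧ ε < ‖T ((pick w - w) ⊔ 0)‖ := by
    intro w hw
    have := (H w hw).choose_spec
    simp only [hpick_def, dif_pos hw]
    exact this
  set g : ℕ → E × E := fun n => Nat.rec ((pick 0, pick 0) : E × E)
      (fun n p => (pick ((4 ^ (n+1) : ℕ) • p.2), p.2 + pick ((4 ^ (n+1) : ℕ) • p.2))) n
    with hg_def
  set x : ℕ → E := fun n => (g n).1 with hx_def
  set S : ℕ → E := fun n => (g n).2 with hS_def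
  have hSsucc : ∀ n, S (n+1) = S n + x (n+1) := fun n => rfl
  have hxsucc : ∀ n, x (n+1) = pick ((4 ^ (n+1) : ℕ) • S n) := fun n => rfl
  have hx0 : x 0 = pick 0 := rfl
  have hS0 : S 0 = pick 0 := rfl
  clear_value x S g pick
  have hSpos : ∀ n, 0 ≤ S n ∧ 0 ≤ x n ∧ ‖x n‖ ≤ 1 := by
    intro n
    induction n with
    | zero =>
        obtain ⟨h1, h2, _⟩ := hpick 0 le_rfl
        rw [hx0, hS0]
        exact ⟨h1, h1, h2⟩
    | succ n ih =>
        have hu : 0 ≤ (4 ^ (n+1) : ℕ) • S n := nsmul_nonneg ih.1 _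
        obtain ⟨h1, h2, _⟩ := hpick _ hu
        rw [hxsucc, hSsucc, hxsucc]
        exact ⟨add_nonneg ih.1 h1, h1, h2⟩
  have hTε : ∀ n, ε < ‖T ((x (n+1) - (4 ^ (n+1) : ℕ) • S n) ⊔ 0)‖ := by
    intro n
    have hu : 0 ≤ (4 ^ (n+1) : ℕ) • S n := nsmul_nonneg (hSpos n).1 _
    rw [hxsucc]
    exact (hpick _ hu).2.2
  have hSmono : ∀ n m, n ≤ m → S n ≤ S m := by
    intro n m hnm
    induction m, hnm using Nat.le_induction with
    | base => exact le_rfl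
    | succ m hm ih =>
        rw [hSsucc]
        exact ih.trans (le_add_of_nonneg_right (hSpos (m+1)).2.1)
  have hxleS : ∀ n m, n ≤ m → x n ≤ S m := by
    intro n m hnm
    have h1 : x n ≤ S n := by
      cases n with
      | zero => rw [hx0, hS0]
      | succ n => rw [hSsucc]; exact le_add_of_nonneg_left (hSpos n).1
    exact h1.trans (hSmono n m hnm)
  -- the element u
  have hterm_nonneg : ∀ j : ℕ, (0:E) ≤ ((2:ℝ) ^ (j+1))⁻¹ • x j :=
    fun j => aux_smul_nonneg (by positivity) (hSpos j).2.1
  have hsum : Summable (fun k => ((2:ℝ) ^ (k+1))⁻¹ • x k) := by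
    apply Summable.of_norm_bounded (g := fun k => (2⁻¹:ℝ) ^ k)
      (summable_geometric_of_lt_one (by norm_num) (by norm_num))
    intro k
    rw [norm_smul, Real.norm_eq_abs, abs_of_nonneg (by positivity)]
    calc ((2:ℝ) ^ (k+1))⁻¹ * ‖x k‖ ≤ ((2:ℝ) ^ (k+1))⁻¹ * 1 := by
          gcongr
          exact (hSpos k).2.2
      _ ≤ ((2:ℝ) ^ k)⁻¹ := by
          rw [mul_one]
          apply inv_anti₀ (by positivity)
          apply pow_le_pow_right₀ (by norm_num)
          omega
      _ = (2⁻¹:ℝ) ^ k := by rw [inv_pow]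
  set u : E := ∑' k, ((2:ℝ) ^ (k+1))⁻¹ • x k with hu_def
  have hu0 : 0 ≤ u := tsum_nonneg hterm_nonneg
  have hxu : ∀ k, ((2:ℝ) ^ (k+1))⁻¹ • x k ≤ u :=
    fun k => Summable.le_tsum hsum k (fun j _ => hterm_nonneg j)
  clear_value u
  -- the disjoint sequence y
  set y : ℕ → E := fun n =>
    (x (n+1) - (4 ^ (n+1) : ℕ) • S n - ((2:ℝ) ^ (n+1))⁻¹ • u) ⊔ 0 with hy_def
  have hy_eq : ∀ n, y n = (x (n+1) - (4 ^ (n+1) : ℕ) • S n - ((2:ℝ) ^ (n+1))⁻¹ • u) ⊔ 0 :=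
    fun n => rfl
  clear_value y
  have hy0 : ∀ n, 0 ≤ y n := fun n => (hy_eq n) ▸ le_sup_right
  have hw0 : ∀ n : ℕ, (0:E) ≤ ((2:ℝ) ^ (n+1))⁻¹ • u :=
    fun n => aux_smul_nonneg (by positivity) hu0
  have hyx : ∀ n, y n ≤ x (n+1) := by
    intro n
    rw [hy_eq]
    apply sup_le _ (hSpos (n+1)).2.1
    exact ((sub_le_self _ (hw0 n)).trans (sub_le_self _ (nsmul_nonneg (hSpos n).1 _)))
  have hynorm : ∀ n, ‖y n‖ ≤ 1 := by
    intro n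
    have habs : |y n| ≤ |x (n+1)| := by
      rw [abs_of_nonneg (hy0 n), abs_of_nonneg (hSpos (n+1)).2.1]
      exact hyx n
    exact (norm_le_norm_of_abs_le_abs habs).trans (hSpos (n+1)).2.2
  -- lower bound for ‖T (y n)‖
  have hTy : ∀ n, ε < ‖T (y n)‖ + ‖T‖ * (((2:ℝ) ^ (n+1))⁻¹ * ‖u‖) := by
    intro n
    set c : E := x (n+1) - (4 ^ (n+1) : ℕ) • S n with hc
    set w : E := ((2:ℝ) ^ (n+1))⁻¹ • u with hw
    have hzy : y n ≤ c ⊔ 0 := by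
      rw [hy_eq]
      exact sup_le_sup_right (sub_le_self _ (hw0 n)) 0
    have hcy : c ⊔ 0 ≤ y n + w := by
      rw [hy_eq]
      apply sup_le _ (add_nonneg ((hy_eq n) ▸ hy0 n) (hw0 n))
      calc c = (c - w) + w := by abel
        _ ≤ ((c - w) ⊔ 0) + w := add_le_add_left le_sup_left w
    have habs : |c ⊔ 0 - y n| ≤ |w| := by
      rw [abs_of_nonneg (hw0 n), abs_of_nonneg (sub_nonneg.2 hzy)]
      exact sub_le_iff_le_add.2 (by rw [add_comm]; exact hcy)
    have hnrm : ‖c ⊔ 0 - y n‖ ≤ ((2:ℝ) ^ (n+1))⁻¹ * ‖u‖ := by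
      have h1 := norm_le_norm_of_abs_le_abs habs
      rwa [hw, norm_smul, Real.norm_eq_abs,
        abs_of_nonneg (by positivity : (0:ℝ) ≤ ((2:ℝ) ^ (n+1))⁻¹)] at h1
    have h2 : ‖T (c ⊔ 0)‖ ≤ ‖T (y n)‖ + ‖T‖ * (((2:ℝ) ^ (n+1))⁻¹ * ‖u‖) := by
      calc ‖T (c ⊔ 0)‖ = ‖T (y n) + T (c ⊔ 0 - y n)‖ := by
            have e : y n + (c ⊔ 0 - y n) = c ⊔ 0 := by abel
            rw [← map_add, e]
        _ ≤ ‖T (y n)‖ + ‖T (c ⊔ 0 - y n)‖ := norm_add_le _ _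
        _ ≤ ‖T (y n)‖ + ‖T‖ * ‖c ⊔ 0 - y n‖ :=
            add_le_add_right (T.le_opNorm _) _
        _ ≤ _ := by gcongr
    exact lt_of_lt_of_le (hTε n) h2
  -- disjointness
  have hdisj : ∀ n m, n < m → y n ⊓ y m = 0 := by
    intro n m hnm
    set t : ℝ := (((2:ℝ) ^ (n+1)) * ((2:ℝ) ^ (m+1+1)))⁻¹ with ht_def
    have htpos : 0 < t := by positivity
    have ht1 : t ≤ 1 := by
      rw [ht_def]
      apply inv_le_one_of_one_le₀
      calc (1:ℝ) = 1 * 1 := by norm_num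
        _ ≤ 2 ^ (n+1) * 2 ^ (m+1+1) := by
            gcongr <;> exact one_le_pow₀ (by norm_num)
    have hNt : 1 ≤ ((4:ℝ) ^ (m+1)) * t := by
      rw [ht_def, ← div_eq_mul_inv, le_div_iff₀ (by positivity)]
      have h4 : (4:ℝ) ^ (m+1) = 2 ^ (2*(m+1)) := by
        rw [show (4:ℝ) = 2^2 by norm_num, ← pow_mul]
      rw [one_mul, h4, ← pow_add]
      exact pow_le_pow_right₀ (by norm_num) (by omega)
    -- step 1 : y n ≤ (x (n+1) - t • x (m+1)) ⊔ 0
    have htb : t • x (m+1) ≤ ((2:ℝ) ^ (n+1))⁻¹ • u := by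
      have h1 : ((2:ℝ) ^ (m+1+1))⁻¹ • x (m+1) ≤ u := hxu (m+1)
      have h2 := aux_smul_mono (by positivity : (0:ℝ) ≤ ((2:ℝ) ^ (n+1))⁻¹) h1
      rwa [smul_smul, ← mul_inv] at h2
    have hstep1 : y n ≤ (x (n+1) - t • x (m+1)) ⊔ 0 := by
      rw [hy_eq]
      apply sup_le_sup_right
      calc x (n+1) - (4 ^ (n+1) : ℕ) • S n - ((2:ℝ) ^ (n+1))⁻¹ • u
          ≤ x (n+1) - ((2:ℝ) ^ (n+1))⁻¹ • u := by
            have := nsmul_nonneg (hSpos n).1 (4 ^ (n+1))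
            have h' : x (n+1) - (4 ^ (n+1) : ℕ) • S n ≤ x (n+1) := sub_le_self _ this
            exact sub_le_sub_right h' _
        _ ≤ x (n+1) - t • x (m+1) := sub_le_sub_left htb _
    -- step 2 : y m ≤ (x (m+1) - (4^(m+1) : ℝ) • x (n+1)) ⊔ 0
    have hstep2 : y m ≤ (x (m+1) - ((4:ℝ) ^ (m+1)) • x (n+1)) ⊔ 0 := by
      rw [hy_eq]
      apply sup_le_sup_right
      have hA : ((4:ℝ) ^ (m+1)) • x (n+1) ≤ (4 ^ (m+1) : ℕ) • S m := by
        have hcast : ((4:ℝ) ^ (m+1)) • x (n+1) = (4 ^ (m+1) : ℕ) • x (n+1) := by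
          rw [← Nat.cast_smul_eq_nsmul ℝ]
          norm_num
        rw [hcast]
        exact nsmul_le_nsmul_right (hxleS (n+1) m (by omega)) _
      calc x (m+1) - (4 ^ (m+1) : ℕ) • S m - ((2:ℝ) ^ (m+1))⁻¹ • u
          ≤ x (m+1) - (4 ^ (m+1) : ℕ) • S m := sub_le_self _ (hw0 m)
        _ ≤ x (m+1) - ((4:ℝ) ^ (m+1)) • x (n+1) := sub_le_sub_left hA _
    refine le_antisymm ?_ (le_inf (hy0 n) (hy0 m))
    calc y n ⊓ y m ≤ ((x (n+1) - t • x (m+1)) ⊔ 0) ⊓ ((x (m+1) - ((4:ℝ) ^ (m+1)) • x (n+1)) ⊔ 0) :=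
          inf_le_inf hstep1 hstep2
      _ = 0 := aux_key_disjoint (hSpos (n+1)).2.1 htpos ht1 hNt
  -- contradiction via M-weak compactness
  have htend := hMW y
    (by
      intro n m hnm
      rcases lt_or_gt_of_ne hnm with h | h
      · rw [abs_of_nonneg (hy0 n), abs_of_nonneg (hy0 m)]
        exact hdisj n m h
      · rw [abs_of_nonneg (hy0 n), abs_of_nonneg (hy0 m), inf_comm]
        exact hdisj m n h)
    ⟨1, hynorm⟩
  have h1 : ∀ᶠ n in atTop, ‖T (y n)‖ < ε / 2 :=
    htend.eventually_lt_const (half_pos hε)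
  have h2 : ∀ᶠ n : ℕ in atTop, ‖T‖ * (((2:ℝ) ^ (n+1))⁻¹ * ‖u‖) < ε / 2 := by
    have hinv : Tendsto (fun n : ℕ => ((2:ℝ) ^ (n+1))⁻¹) atTop (𝓝 0) := by
      have h := tendsto_pow_atTop_atTop_of_one_lt (one_lt_two (α := ℝ))
      exact (h.comp (tendsto_add_atTop_nat 1)).inv_tendsto_atTop
    have : Tendsto (fun n : ℕ => ‖T‖ * (((2:ℝ) ^ (n+1))⁻¹ * ‖u‖)) atTop (𝓝 0) := by
      have := (hinv.mul_const ‖u‖).const_mul ‖T‖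
      simpa using this
    exact this.eventually_lt_const (half_pos hε)
  obtain ⟨n, hn1, hn2⟩ := (h1.and h2).exists
  have := hTy n
  linarith

lemma aux_decomp {E : Type*} [NormedAddCommGroup E] [Lattice E] [HasSolidNorm E]
    [IsOrderedAddMonoid E] (a u : E) :
    a ⊓ u + ((a - u) ⊔ 0) = a := by
  have h1 : (a - u) ⊔ 0 = a ⊔ u - u := by rw [sup_sub, sub_self]
  rw [h1, ← add_sub_assoc, inf_add_sup, add_sub_cancel_right]

theorem MW_limited {E F : Type*} [NormedAddCommGroup E] [Lattice E] [HasSolidNorm E]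
    [IsOrderedAddMonoid E] [NormedSpace ℝ E] [CompleteSpace E]
    [NormedAddCommGroup F] [Lattice F] [HasSolidNorm F]
    [IsOrderedAddMonoid F] [NormedSpace ℝ F] [CompleteSpace F]
    (hE' : ∀ g : ℕ → E →L[ℝ] ℝ,
      (∀ x : E, Tendsto (fun n => g n x) atTop (𝓝 0)) →
      ∀ x : E, 0 ≤ x →
        Tendsto (fun n => sSup {r : ℝ | ∃ w : E, |w| ≤ x ∧ r = g n w}) atTop (𝓝 0))
    (T : E →L[ℝ] F)
    (hMW : ∀ x : ℕ → E, (∀ n m, n ≠ m → |x n| ⊓ |x m| = 0) →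
      (∃ C : ℝ, ∀ n, ‖x n‖ ≤ C) →
      Tendsto (fun n => ‖T (x n)‖) atTop (𝓝 0)) :
    ∀ f : ℕ → F →L[ℝ] ℝ,
      (∀ y : F, Tendsto (fun n => f n y) atTop (𝓝 0)) →
      Tendsto (fun n => ‖(f n).comp T‖) atTop (𝓝 0) := by
  intro f hf
  have hbdd0 : ∀ y : F, BddAbove (Set.range fun n => ‖f n y‖) := fun y => by
    simpa using (hf y).norm.bddAbove_range
  obtain ⟨M, hM⟩ := banach_steinhaus (g := f) (fun y =>
    ⟨_, fun i => le_ciSup (hbdd0 y) i⟩)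
  have hM0 : 0 ≤ M := (norm_nonneg (f 0)).trans (hM 0)
  have hg : ∀ x : E, Tendsto (fun n => ((f n).comp T) x) atTop (𝓝 0) := fun x => by
    simpa using hf (T x)
  rw [Metric.tendsto_atTop]
  intro ε' hε'
  set δ : ℝ := ε' / (4 * (M + 1)) with hδ
  have hδpos : 0 < δ := by positivity
  obtain ⟨u, hu0, hu⟩ := aux_eps T hMW hδpos
  have hs := hE' (fun n => (f n).comp T) hg u hu0
  set s : ℕ → ℝ := fun n => sSup {r : ℝ | ∃ w : E, |w| ≤ u ∧ r = ((f n).comp T) w} with hs_def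
  rw [Metric.tendsto_atTop] at hs
  obtain ⟨N, hN⟩ := hs (ε' / 8) (by positivity)
  -- the uniform bound
  have hb : ∀ n, ‖(f n).comp T‖ ≤ 2 * s n + 2 * (M * δ) := by
    intro n
    have hbdd : BddAbove {r : ℝ | ∃ w : E, |w| ≤ u ∧ r = ((f n).comp T) w} := by
      refine ⟨‖(f n).comp T‖ * ‖u‖, ?_⟩
      rintro r ⟨w, hw, rfl⟩
      have hnw : ‖w‖ ≤ ‖u‖ :=
        norm_le_norm_of_abs_le_abs (by rwa [abs_of_nonneg hu0])
      calc ((f n).comp T) w ≤ |((f n).comp T) w| := le_abs_self _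
        _ = ‖((f n).comp T) w‖ := rfl
        _ ≤ ‖(f n).comp T‖ * ‖w‖ := ContinuousLinearMap.le_opNorm _ _
        _ ≤ ‖(f n).comp T‖ * ‖u‖ := by gcongr
    have hmem : ∀ w : E, |w| ≤ u → ((f n).comp T) w ≤ s n := fun w hw =>
      le_csSup hbdd ⟨w, hw, rfl⟩
    have habs : ∀ w : E, |w| ≤ u → |f n (T w)| ≤ s n := by
      intro w hw
      rw [abs_le]
      constructor
      · have h := hmem (-w) (by rwa [abs_neg])
        simp only [ContinuousLinearMap.comp_apply, map_neg] at h
        linarith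
      · have h := hmem w hw
        simpa only [ContinuousLinearMap.comp_apply] using h
    have hs0 : 0 ≤ s n := le_csSup hbdd ⟨0, by simpa using hu0, by simp⟩
    apply ContinuousLinearMap.opNorm_le_of_unit_norm
    · have : 0 ≤ M * δ := mul_nonneg hM0 hδpos.le
      linarith
    intro z hz
    have hz1 : ‖z‖ ≤ 1 := le_of_eq hz
    -- positive and negative parts
    have hzp0 : (0:E) ≤ z⁺ := posPart_nonneg z
    have hzm0 : (0:E) ≤ z⁻ := negPart_nonneg z
    have hzpn : ‖z⁺‖ ≤ 1 := by
      have h : |z⁺| ≤ |z| := by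
        rw [abs_of_nonneg hzp0, posPart_def]
        exact sup_le (le_abs_self z) (abs_nonneg z)
      exact (norm_le_norm_of_abs_le_abs h).trans hz1
    have hzmn : ‖z⁻‖ ≤ 1 := by
      have h : |z⁻| ≤ |z| := by
        rw [abs_of_nonneg hzm0, negPart_def]
        exact sup_le (neg_le_abs z) (abs_nonneg z)
      exact (norm_le_norm_of_abs_le_abs h).trans hz1
    have hdec : z = (z⁺ ⊓ u - z⁻ ⊓ u) + (((z⁺ - u) ⊔ 0) - ((z⁻ - u) ⊔ 0)) := by
      have h1 := aux_decomp z⁺ u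
      have h2 := aux_decomp z⁻ u
      have h3 := posPart_sub_negPart z
      calc z = z⁺ - z⁻ := h3.symm
        _ = (z⁺ ⊓ u + ((z⁺ - u) ⊔ 0)) - (z⁻ ⊓ u + ((z⁻ - u) ⊔ 0)) := by rw [h1, h2]
        _ = _ := by abel
    have hA : |f n (T (z⁺ ⊓ u))| ≤ s n := by
      apply habs
      rw [abs_of_nonneg (le_inf hzp0 hu0)]
      exact inf_le_right
    have hB : |f n (T (z⁻ ⊓ u))| ≤ s n := by
      apply habs
      rw [abs_of_nonneg (le_inf hzm0 hu0)]
      exact inf_le_right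
    have hC : |f n (T ((z⁺ - u) ⊔ 0))| ≤ M * δ := by
      calc |f n (T ((z⁺ - u) ⊔ 0))| ≤ ‖f n‖ * ‖T ((z⁺ - u) ⊔ 0)‖ :=
            (f n).le_opNorm _
        _ ≤ M * δ := mul_le_mul (hM n) (hu z⁺ hzp0 hzpn) (norm_nonneg _) hM0
    have hD : |f n (T ((z⁻ - u) ⊔ 0))| ≤ M * δ := by
      calc |f n (T ((z⁻ - u) ⊔ 0))| ≤ ‖f n‖ * ‖T ((z⁻ - u) ⊔ 0)‖ :=
            (f n).le_opNorm _
        _ ≤ M * δ := mul_le_mul (hM n) (hu z⁻ hzm0 hzmn) (norm_nonneg _) hM0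
    have hsplit : f n (T z) = f n (T (z⁺ ⊓ u)) - f n (T (z⁻ ⊓ u))
        + (f n (T ((z⁺ - u) ⊔ 0)) - f n (T ((z⁻ - u) ⊔ 0))) := by
      conv_lhs => rw [hdec]
      rw [map_add, map_sub, map_sub, map_add, map_sub, map_sub]
    calc ‖((f n).comp T) z‖ = |f n (T z)| := rfl
      _ ≤ s n + s n + (M * δ + M * δ) := by
          rw [hsplit]
          calc |_| ≤ |f n (T (z⁺ ⊓ u)) - f n (T (z⁻ ⊓ u))|
              + |f n (T ((z⁺ - u) ⊔ 0)) - f n (T ((z⁻ - u) ⊔ 0))| := abs_add_le _ _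
            _ ≤ (|f n (T (z⁺ ⊓ u))| + |f n (T (z⁻ ⊓ u))|)
              + (|f n (T ((z⁺ - u) ⊔ 0))| + |f n (T ((z⁻ - u) ⊔ 0))|) :=
                add_le_add (abs_sub _ _) (abs_sub _ _)
            _ ≤ _ := by
                have := hA; have := hB; have := hC; have := hD
                linarith
      _ = 2 * s n + 2 * (M * δ) := by ring
  refine ⟨N, fun n hn => ?_⟩
  have h2 := hN n hn
  rw [Real.dist_eq, sub_zero] at h2 ⊢
  rw [abs_of_nonneg (norm_nonneg _)]
  have hsn : s n < ε' / 8 := (le_abs_self _).trans_lt h2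
  have hMd : M * δ ≤ (M + 1) * δ :=
    mul_le_mul_of_nonneg_right (by linarith) hδpos.le
  have hMd2 : (M + 1) * δ = ε' / 4 := by
    rw [hδ]
    field_simp
  have := hb n
  linarith

end Eps

/-- If the lattice operations in `E′` are sequentially
w*-continuous, then every M-weakly compact operator `T : E → F` between Banach
lattices is limited: `‖T′ f_n‖ → 0` for every w*-null sequence `(f_n)` in `F′`. -/
theorem MW_implies_limited_of_seq_wstar_continuous_lattice_ops
    {E F : Type*} [NormedAddCommGroup E] [Lattice E] [HasSolidNorm E]
    [IsOrderedAddMonoid E] [NormedSpace ℝ E] [CompleteSpace E]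
    [NormedAddCommGroup F] [Lattice F] [HasSolidNorm F]
    [IsOrderedAddMonoid F] [NormedSpace ℝ F] [CompleteSpace F]
    -- the lattice operations in E′ are sequentially w*-continuous
    (hE' : ∀ g : ℕ → E →L[ℝ] ℝ,
      (∀ x : E, Tendsto (fun n => g n x) atTop (𝓝 0)) →
      ∀ x : E, 0 ≤ x →
        Tendsto (fun n => sSup {r : ℝ | ∃ w : E, |w| ≤ x ∧ r = g n w}) atTop (𝓝 0))
    (T : E →L[ℝ] F)
    -- T is M-weakly compact
    (hMW : ∀ x : ℕ → E, (∀ n m, n ≠ m → |x n| ⊓ |x m| = 0) →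
      (∃ C : ℝ, ∀ n, ‖x n‖ ≤ C) →
      Tendsto (fun n => ‖T (x n)‖) atTop (𝓝 0)) :
    ∀ f : ℕ → F →L[ℝ] ℝ,
      (∀ y : F, Tendsto (fun n => f n y) atTop (𝓝 0)) →
      Tendsto (fun n => ‖(f n).comp T‖) atTop (𝓝 0) :=
  MW_limited hE' T hMW
end
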